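/- In a finite-horizon POMDP with horizon H, memoryless evaluation policy π_e and memoryless behavior policy π_b (with π_b(a|o) > 0 for all o, a), for any function V on futures (with the convention V(f_{H+1}) = 0) it holds that J(π_e) − E_{π_b}[V(f_1)] = Σ_{h=1}^H E_{s_h ∼ d^{π_e}_h}[(B^S V)(s_h)], where (B^S V)(s_h) := E[r_h + V(f_{h+1}) | s_h, with a_h ∼ π_e and a_{h+1:H} ∼ π_b] − E_{π_b}[V(f_h) | s_h]. -/

import Mathlib

open Finset Matrix

noncomputable section

/-- A finite-horizon POMDP with horizon `H`, latent states `S`, observations `O`, actions `A`,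
transition kernel `T`, emission distribution `Em`, reward `R`, and initial distribution `d1`. -/
structure POMDP (S O A : Type) where
  H : ℕ
  T : S → A → S → ℝ
  Em : S → O → ℝ
  R : O → A → ℝ
  d1 : S → ℝ

namespace POMDP

variable {S O A : Type} [Fintype S] [Fintype O] [Fintype A]
  [DecidableEq S] [DecidableEq O] [DecidableEq A]

/-- A trajectory: latent states `s_1, …, s_{H+1}`, observations `o_1, …, o_H`, and actions
`a_1, …, a_H` (0-indexed in Lean). -/
abbrev Traj (P : POMDP S O A) : Type :=
  (Fin (P.H + 1) → S) × (Fin P.H → O) × (Fin P.H → A)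

/-- Probability of a trajectory under a (possibly time-dependent) policy schedule. -/
def trajProb (P : POMDP S O A) (sched : ℕ → O → A → ℝ) (tr : P.Traj) : ℝ :=
  P.d1 (tr.1 0) *
    ∏ h : Fin P.H,
      (P.Em (tr.1 h.castSucc) (tr.2.1 h) * sched h (tr.2.1 h) (tr.2.2 h) *
        P.T (tr.1 h.castSucc) (tr.2.2 h) (tr.1 h.succ))

/-- Expectation of a trajectory functional under a policy schedule. -/
def expec (P : POMDP S O A) (sched : ℕ → O → A → ℝ) (g : P.Traj → ℝ) : ℝ :=
  ∑ tr : P.Traj, P.trajProb sched tr * g tr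

/-- The expected return `J(π)` of a memoryless policy `π`. -/
def J (P : POMDP S O A) (π : O → A → ℝ) : ℝ :=
  P.expec (fun _ => π) (fun tr => ∑ h : Fin P.H, P.R (tr.2.1 h) (tr.2.2 h))

/-- The marginal distribution `d^π_h` of the latent state `s_h`. -/
def stateDist (P : POMDP S O A) (sched : ℕ → O → A → ℝ) (h : Fin P.H) (s : S) : ℝ :=
  P.expec sched (fun tr => if tr.1 h.castSucc = s then 1 else 0)

/-- Conditional expectation of `g` given the event `E` (junk value `0` when `E` has
probability zero, by real-division convention). -/
def condExp (P : POMDP S O A) (sched : ℕ → O → A → ℝ) (E : P.Traj → Prop)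
    [DecidablePred E] (g : P.Traj → ℝ) : ℝ :=
  (∑ tr : P.Traj, if E tr then P.trajProb sched tr * g tr else 0) /
    (∑ tr : P.Traj, if E tr then P.trajProb sched tr else 0)

/-- The schedule playing `π_e` at step `h` and `π_b` at every other step. -/
def mix (πe πb : O → A → ℝ) (h : ℕ) : ℕ → O → A → ℝ :=
  fun k => if k = h then πe else πb

/-- `V` is a function of the future `f_h = (o_h, a_h, …, o_H, a_H)`: its value at step `h`
depends only on the observations and actions from step `h` onwards. -/
def FutureDep (P : POMDP S O A) (V : ℕ → (Fin P.H → O) → (Fin P.H → A) → ℝ) : Prop :=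
  ∀ (h : ℕ) (o o' : Fin P.H → O) (a a' : Fin P.H → A),
    (∀ k : Fin P.H, h ≤ (k : ℕ) → o k = o' k ∧ a k = a' k) → V h o a = V h o' a'

/-- `w` is a function of the history `τ_h = (o_1, a_1, …, o_{h-1}, a_{h-1})`: its value at
step `h` depends only on the observations and actions before step `h`. -/
def HistDep (P : POMDP S O A) (w : ℕ → (Fin P.H → O) → (Fin P.H → A) → ℝ) : Prop :=
  ∀ (h : ℕ) (o o' : Fin P.H → O) (a a' : Fin P.H → A),
    (∀ k : Fin P.H, (k : ℕ) < h → o k = o' k ∧ a k = a' k) → w h o a = w h o' a'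

/-- The latent-state Bellman residual `(B^S V)(s_h)`:
`E[r_h + V(f_{h+1}) | s_h, a_h ∼ π_e, a_{h+1:H} ∼ π_b] − E_{π_b}[V(f_h) | s_h]`. -/
def BS (P : POMDP S O A) (πe πb : O → A → ℝ)
    (V : ℕ → (Fin P.H → O) → (Fin P.H → A) → ℝ) (h : Fin P.H) (s : S) : ℝ :=
  P.condExp (mix πe πb h) (fun tr => tr.1 h.castSucc = s)
      (fun tr => P.R (tr.2.1 h) (tr.2.2 h) + V ((h : ℕ) + 1) tr.2.1 tr.2.2) -
    P.condExp (fun _ => πb) (fun tr => tr.1 h.castSucc = s)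
      (fun tr => V (h : ℕ) tr.2.1 tr.2.2)

/-- The history Bellman residual `(B^H V)(τ_h)`:
`E[r_h + V(f_{h+1}) | τ_h, a_h ∼ π_e, a_{h+1:H} ∼ π_b] − E_{π_b}[V(f_h) | τ_h]`. -/
def BH (P : POMDP S O A) (πe πb : O → A → ℝ)
    (V : ℕ → (Fin P.H → O) → (Fin P.H → A) → ℝ) (h : Fin P.H)
    (o : Fin P.H → O) (a : Fin P.H → A) : ℝ :=
  P.condExp (mix πe πb h)
      (fun tr => ∀ k : Fin P.H, (k : ℕ) < (h : ℕ) → tr.2.1 k = o k ∧ tr.2.2 k = a k)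
      (fun tr => P.R (tr.2.1 h) (tr.2.2 h) + V ((h : ℕ) + 1) tr.2.1 tr.2.2) -
    P.condExp (fun _ => πb)
      (fun tr => ∀ k : Fin P.H, (k : ℕ) < (h : ℕ) → tr.2.1 k = o k ∧ tr.2.2 k = a k)
      (fun tr => V (h : ℕ) tr.2.1 tr.2.2)

/-- Auxiliary recursion for the latent state value function, by remaining horizon. -/
def latentValueAux (P : POMDP S O A) (π : O → A → ℝ) : ℕ → S → ℝ
  | 0, _ => 0
  | k + 1, s =>
      ∑ o, P.Em s o * ∑ a, π o a *
        (P.R o a + ∑ s', P.T s a s' * latentValueAux P π k s')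

/-- The latent state value function `V^π_S(s_h) = E_π[Σ_{h' ≥ h} r_{h'} | s_h]`. -/
def latentValue (P : POMDP S O A) (π : O → A → ℝ) (h : ℕ) (s : S) : ℝ :=
  latentValueAux P π (P.H - h) s

end POMDP

open POMDP

namespace Stmt0Aux
set_option linter.unusedSectionVars false
variable {S O A : Type} [Fintype S] [Fintype O] [Fintype A]
  [DecidableEq S] [DecidableEq O] [DecidableEq A]

abbrev CT (S O A : Type) (n : ℕ) : Type :=
  (Fin (n + 1) → S) × (Fin n → O) × (Fin n → A)

def chainP (Em : S → O → ℝ) (T : S → A → S → ℝ) (n : ℕ) (d : S → ℝ)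
    (sched : ℕ → O → A → ℝ) (tr : CT S O A n) : ℝ :=
  d (tr.1 0) * ∏ k : Fin n,
    (Em (tr.1 k.castSucc) (tr.2.1 k) * sched k (tr.2.1 k) (tr.2.2 k) *
      T (tr.1 k.castSucc) (tr.2.2 k) (tr.1 k.succ))

def peelEquiv (S O A : Type) (n : ℕ) : (S × O × A) × CT S O A n ≃ CT S O A (n + 1) where
  toFun p := (Fin.cons p.1.1 p.2.1, Fin.cons p.1.2.1 p.2.2.1, Fin.cons p.1.2.2 p.2.2.2)
  invFun tr := ((tr.1 0, tr.2.1 0, tr.2.2 0),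
    (Fin.tail tr.1, Fin.tail tr.2.1, Fin.tail tr.2.2))
  left_inv p := by
    obtain ⟨⟨s0, o0, a0⟩, ⟨sf, og, af⟩⟩ := p
    simp [Fin.tail_cons]
  right_inv tr := by
    obtain ⟨sf, og, af⟩ := tr
    simp [Fin.cons_self_tail]

lemma chainP_cons (Em : S → O → ℝ) (T : S → A → S → ℝ) (n : ℕ) (d : S → ℝ)
    (sched : ℕ → O → A → ℝ) (s0 : S) (o0 : O) (a0 : A) (tr : CT S O A n) :
    chainP Em T (n + 1) d sched
      (Fin.cons s0 tr.1, Fin.cons o0 tr.2.1, Fin.cons a0 tr.2.2) =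
    d s0 * (Em s0 o0 * sched 0 o0 a0) *
      chainP Em T n (T s0 a0) (fun k => sched (k + 1)) tr := by
  unfold chainP
  rw [Fin.prod_univ_succ]
  simp only [Fin.castSucc_zero, Fin.val_zero, Fin.val_succ, ← Fin.succ_castSucc,
    Fin.cons_zero, Fin.cons_succ]
  ring

lemma sum_chain_succ (Em : S → O → ℝ) (T : S → A → S → ℝ) (n : ℕ) (d : S → ℝ)
    (sched : ℕ → O → A → ℝ) (g : CT S O A (n + 1) → ℝ) :
    ∑ tr : CT S O A (n + 1), chainP Em T (n + 1) d sched tr * g tr =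
      ∑ s0 : S, ∑ o0 : O, ∑ a0 : A,
        d s0 * (Em s0 o0 * sched 0 o0 a0) *
          ∑ tr : CT S O A n,
            chainP Em T n (T s0 a0) (fun k => sched (k + 1)) tr *
              g (Fin.cons s0 tr.1, Fin.cons o0 tr.2.1, Fin.cons a0 tr.2.2) := by
  rw [← Equiv.sum_comp (peelEquiv S O A n)
    (fun tr => chainP Em T (n + 1) d sched tr * g tr)]
  rw [Fintype.sum_prod_type, Fintype.sum_prod_type]
  refine Finset.sum_congr rfl fun s0 _ => ?_
  rw [Fintype.sum_prod_type]
  refine Finset.sum_congr rfl fun o0 _ => Finset.sum_congr rfl fun a0 _ => ?_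
  rw [Finset.mul_sum]
  refine Finset.sum_congr rfl fun tr _ => ?_
  simp only [peelEquiv, Equiv.coe_fn_mk]
  rw [chainP_cons]
  ring


lemma sum_chainP (Em : S → O → ℝ) (T : S → A → S → ℝ)
    (hEm : ∀ s, ∑ o, Em s o = 1) (hT : ∀ s a, ∑ s', T s a s' = 1) :
    ∀ (n : ℕ) (d : S → ℝ) (sched : ℕ → O → A → ℝ),
      (∀ k o, ∑ a, sched k o a = 1) →
      ∑ tr : CT S O A n, chainP Em T n d sched tr = ∑ s, d s := by
  intro n
  induction n with
  | zero =>
    intro d sched hs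
    rw [Fintype.sum_prod_type]
    have h0 : ∀ f : Fin 1 → S,
        (∑ q : (Fin 0 → O) × (Fin 0 → A), chainP Em T 0 d sched (f, q)) = d (f 0) := by
      intro f
      haveI : Unique (Fin 0 → O) := ⟨⟨Fin.elim0⟩, fun f => funext fun x => x.elim0⟩
      haveI : Unique (Fin 0 → A) := ⟨⟨Fin.elim0⟩, fun f => funext fun x => x.elim0⟩
      haveI : Unique ((Fin 0 → O) × (Fin 0 → A)) :=
        ⟨⟨(default, default)⟩, fun p => Prod.ext (Subsingleton.elim _ _) (Subsingleton.elim _ _)⟩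
      rw [Fintype.sum_unique]
      simp [chainP]
    simp only [h0]
    exact Fintype.sum_equiv (Equiv.funUnique (Fin 1) S) _ _ (fun f => rfl)
  | succ n ih =>
    intro d sched hs
    have key : ∑ tr : CT S O A (n+1), chainP Em T (n+1) d sched tr
        = ∑ s0 : S, ∑ o0 : O, ∑ a0 : A, d s0 * (Em s0 o0 * sched 0 o0 a0) *
            ∑ tr : CT S O A n, chainP Em T n (T s0 a0) (fun k => sched (k + 1)) tr := by
      simpa using sum_chain_succ Em T n d sched (fun _ => 1)
    rw [key]
    have hinner : ∀ s0 a0, (∑ tr : CT S O A n,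
        chainP Em T n (T s0 a0) (fun k => sched (k + 1)) tr) = 1 := by
      intro s0 a0
      rw [ih (T s0 a0) _ (fun k o => hs (k+1) o), hT]
    simp only [hinner]
    simp only [mul_one, ← Finset.mul_sum, hs, hEm]

lemma sum_chainP_weight (Em : S → O → ℝ) (T : S → A → S → ℝ)
    (hEm : ∀ s, ∑ o, Em s o = 1) (hT : ∀ s a, ∑ s', T s a s' = 1)
    (n : ℕ) (d : S → ℝ) (sched : ℕ → O → A → ℝ)
    (hs : ∀ k o, ∑ a, sched k o a = 1) (w : S → ℝ) :
    ∑ tr : CT S O A n, chainP Em T n d sched tr * w (tr.1 0) = ∑ s, d s * w s := by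
  have h1 : ∀ tr : CT S O A n, chainP Em T n d sched tr * w (tr.1 0)
      = chainP Em T n (fun s => d s * w s) sched tr := by
    intro tr; unfold chainP; ring
  simp only [h1]
  exact sum_chainP Em T hEm hT n _ sched hs

lemma chain_sched_irrel (Em : S → O → ℝ) (T : S → A → S → ℝ)
    (hEm : ∀ s, ∑ o, Em s o = 1) (hT : ∀ s a, ∑ s', T s a s' = 1) :
    ∀ (m n : ℕ) (d : S → ℝ) (sched1 sched2 : ℕ → O → A → ℝ),
      (∀ k o, ∑ a, sched1 k o a = 1) → (∀ k o, ∑ a, sched2 k o a = 1) →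
      (∀ k, k < m → sched1 k = sched2 k) →
      ∀ g : CT S O A n → ℝ,
        (∀ tr tr' : CT S O A n,
          (∀ k : Fin (n + 1), (k : ℕ) ≤ m → tr.1 k = tr'.1 k) →
          (∀ k : Fin n, (k : ℕ) < m → tr.2.1 k = tr'.2.1 k ∧ tr.2.2 k = tr'.2.2 k) →
          g tr = g tr') →
      ∑ tr : CT S O A n, chainP Em T n d sched1 tr * g tr
        = ∑ tr : CT S O A n, chainP Em T n d sched2 tr * g tr := by
  intro m
  induction m with
  | zero =>
    intro n d sched1 sched2 h1 h2 hag g hg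
    by_cases hne : Nonempty (CT S O A n)
    · obtain ⟨tr0⟩ := hne
      set w : S → ℝ := fun s => g (Function.update tr0.1 0 s, tr0.2) with hw
      have hgw : ∀ tr : CT S O A n, g tr = w (tr.1 0) := by
        intro tr
        refine hg tr _ ?_ ?_
        · intro k hk
          have hk0 : k = 0 := Fin.ext (Nat.le_zero.mp hk)
          subst hk0
          simp [Function.update_self]
        · intro k hk; omega
      simp only [hgw]
      rw [sum_chainP_weight Em T hEm hT n d sched1 h1 w,
        sum_chainP_weight Em T hEm hT n d sched2 h2 w]
    · rw [not_nonempty_iff] at hne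
      simp
  | succ m ih =>
    intro n d sched1 sched2 h1 h2 hag g hg
    cases n with
    | zero => simp [chainP]
    | succ n =>
      rw [sum_chain_succ, sum_chain_succ]
      refine Finset.sum_congr rfl fun s0 _ => Finset.sum_congr rfl fun o0 _ =>
        Finset.sum_congr rfl fun a0 _ => ?_
      rw [hag 0 (Nat.succ_pos m)]
      congr 1
      refine ih n (T s0 a0) _ _ (fun k o => h1 (k+1) o) (fun k o => h2 (k+1) o)
        (fun k hk => hag (k+1) (by omega)) _ ?_
      intro tr tr' hst hoa
      refine hg _ _ ?_ ?_
      · intro k hk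
        rcases Fin.eq_zero_or_eq_succ k with rfl | ⟨j, rfl⟩
        · simp
        · simp only [Fin.cons_succ]
          exact hst j (by simp only [Fin.val_succ] at hk; omega)
      · intro k hk
        rcases Fin.eq_zero_or_eq_succ k with rfl | ⟨j, rfl⟩
        · simp
        · simp only [Fin.cons_succ]
          exact hoa j (by simp only [Fin.val_succ] at hk; omega)


def splice {S O A : Type} {n : ℕ} (h : ℕ) (x y : CT S O A n) : CT S O A n :=
  (fun k => if (k : ℕ) ≤ h then x.1 k else y.1 k,
   fun k => if (k : ℕ) < h then x.2.1 k else y.2.1 k,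
   fun k => if (k : ℕ) < h then x.2.2 k else y.2.2 k)

lemma splice_splice {n : ℕ} (h : ℕ) (x y : CT S O A n) :
    splice h (splice h x y) (splice h y x) = x := by
  unfold splice
  refine Prod.ext ?_ (Prod.ext ?_ ?_) <;> funext k <;> simp only []
  · by_cases hk : (k : ℕ) ≤ h <;> simp [hk]
  · by_cases hk : (k : ℕ) < h <;> simp [hk]
  · by_cases hk : (k : ℕ) < h <;> simp [hk]

def spliceEquiv (n : ℕ) (h : ℕ) :
    (CT S O A n × CT S O A n) ≃ (CT S O A n × CT S O A n) where
  toFun z := (splice h z.1 z.2, splice h z.2 z.1)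
  invFun z := (splice h z.1 z.2, splice h z.2 z.1)
  left_inv z := Prod.ext (splice_splice h z.1 z.2) (splice_splice h z.2 z.1)
  right_inv z := Prod.ext (splice_splice h z.1 z.2) (splice_splice h z.2 z.1)

lemma splice_fst {n : ℕ} (h : ℕ) (x y : CT S O A n) (k : Fin (n + 1))
    (hk : (k : ℕ) ≤ h) : (splice h x y).1 k = x.1 k := if_pos hk

lemma splice_fst' {n : ℕ} (h : ℕ) (x y : CT S O A n) (k : Fin (n + 1))
    (hk : ¬ (k : ℕ) ≤ h) : (splice h x y).1 k = y.1 k := if_neg hk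

lemma splice_obs {n : ℕ} (h : ℕ) (x y : CT S O A n) (k : Fin n)
    (hk : (k : ℕ) < h) : (splice h x y).2.1 k = x.2.1 k := if_pos hk

lemma splice_obs' {n : ℕ} (h : ℕ) (x y : CT S O A n) (k : Fin n)
    (hk : ¬ (k : ℕ) < h) : (splice h x y).2.1 k = y.2.1 k := if_neg hk

lemma splice_act {n : ℕ} (h : ℕ) (x y : CT S O A n) (k : Fin n)
    (hk : (k : ℕ) < h) : (splice h x y).2.2 k = x.2.2 k := if_pos hk

lemma splice_act' {n : ℕ} (h : ℕ) (x y : CT S O A n) (k : Fin n)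
    (hk : ¬ (k : ℕ) < h) : (splice h x y).2.2 k = y.2.2 k := if_neg hk

lemma splice_chainP (Em : S → O → ℝ) (T : S → A → S → ℝ) {n : ℕ} (h : Fin n)
    (d : S → ℝ) (sched1 sched2 : ℕ → O → A → ℝ)
    (hag : ∀ k, (h : ℕ) ≤ k → sched1 k = sched2 k)
    (x y : CT S O A n) (hxy : x.1 h.castSucc = y.1 h.castSucc) :
    chainP Em T n d sched1 (splice (h : ℕ) x y) *
      chainP Em T n d sched2 (splice (h : ℕ) y x) =
    chainP Em T n d sched1 x * chainP Em T n d sched2 y := by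
  unfold chainP
  rw [splice_fst (h : ℕ) x y 0 (Nat.zero_le _), splice_fst (h : ℕ) y x 0 (Nat.zero_le _)]
  rw [mul_mul_mul_comm, ← Finset.prod_mul_distrib]
  conv_rhs => rw [mul_mul_mul_comm, ← Finset.prod_mul_distrib]
  congr 1
  refine Finset.prod_congr rfl fun k _ => ?_
  by_cases hk : (k : ℕ) < (h : ℕ)
  · rw [splice_fst (h:ℕ) x y k.castSucc (by simp [Fin.coe_castSucc]; omega),
      splice_fst (h:ℕ) y x k.castSucc (by simp [Fin.coe_castSucc]; omega),
      splice_fst (h:ℕ) x y k.succ (by simp [Fin.val_succ]; omega),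
      splice_fst (h:ℕ) y x k.succ (by simp [Fin.val_succ]; omega),
      splice_obs (h:ℕ) x y k hk, splice_obs (h:ℕ) y x k hk,
      splice_act (h:ℕ) x y k hk, splice_act (h:ℕ) y x k hk]
  · have hk' : (h : ℕ) ≤ (k : ℕ) := le_of_not_gt hk
    have e1 : (splice (h:ℕ) x y).1 k.castSucc = y.1 k.castSucc := by
      by_cases hk2 : (k : ℕ) = (h : ℕ)
      · have : k = h := Fin.val_injective hk2
        subst this
        rw [splice_fst (k:ℕ) x y k.castSucc (by simp [Fin.coe_castSucc])]
        exact hxy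
      · exact splice_fst' (h:ℕ) x y k.castSucc (by simp [Fin.coe_castSucc]; omega)
    have e1' : (splice (h:ℕ) y x).1 k.castSucc = x.1 k.castSucc := by
      by_cases hk2 : (k : ℕ) = (h : ℕ)
      · have : k = h := Fin.val_injective hk2
        subst this
        rw [splice_fst (k:ℕ) y x k.castSucc (by simp [Fin.coe_castSucc])]
        exact hxy.symm
      · exact splice_fst' (h:ℕ) y x k.castSucc (by simp [Fin.coe_castSucc]; omega)
    rw [e1, e1',
      splice_fst' (h:ℕ) x y k.succ (by simp [Fin.val_succ]; omega),
      splice_fst' (h:ℕ) y x k.succ (by simp [Fin.val_succ]; omega),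
      splice_obs' (h:ℕ) x y k hk, splice_obs' (h:ℕ) y x k hk,
      splice_act' (h:ℕ) x y k hk, splice_act' (h:ℕ) y x k hk,
      hag (k : ℕ) hk']
    ring


lemma exchange (Em : S → O → ℝ) (T : S → A → S → ℝ) {n : ℕ} (h : Fin n) (s : S)
    (d : S → ℝ) (sched1 sched2 : ℕ → O → A → ℝ)
    (hag : ∀ k, (h : ℕ) ≤ k → sched1 k = sched2 k)
    (G : CT S O A n → ℝ)
    (hG : ∀ x y : CT S O A n,
      (∀ k : Fin n, (h : ℕ) ≤ (k : ℕ) → x.2.1 k = y.2.1 k ∧ x.2.2 k = y.2.2 k) →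
      G x = G y) :
    (∑ tr : CT S O A n, if tr.1 h.castSucc = s then chainP Em T n d sched1 tr * G tr else 0) *
      (∑ tr : CT S O A n, if tr.1 h.castSucc = s then chainP Em T n d sched2 tr else 0) =
    (∑ tr : CT S O A n, if tr.1 h.castSucc = s then chainP Em T n d sched1 tr else 0) *
      (∑ tr : CT S O A n, if tr.1 h.castSucc = s then chainP Em T n d sched2 tr * G tr else 0) := by
  have hpt : ∀ z : CT S O A n × CT S O A n,
      ((fun z : CT S O A n × CT S O A n =>
        (if z.1.1 h.castSucc = s then chainP Em T n d sched1 z.1 * G z.1 else 0) *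
          (if z.2.1 h.castSucc = s then chainP Em T n d sched2 z.2 else 0))
        (spliceEquiv n (h : ℕ) z)) =
      (if z.1.1 h.castSucc = s then chainP Em T n d sched1 z.1 else 0) *
        (if z.2.1 h.castSucc = s then chainP Em T n d sched2 z.2 * G z.2 else 0) := by
    rintro ⟨x, y⟩
    simp only [spliceEquiv, Equiv.coe_fn_mk]
    have hx : (splice (h : ℕ) x y).1 h.castSucc = x.1 h.castSucc :=
      splice_fst _ _ _ _ (by simp [Fin.coe_castSucc])
    have hy : (splice (h : ℕ) y x).1 h.castSucc = y.1 h.castSucc :=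
      splice_fst _ _ _ _ (by simp [Fin.coe_castSucc])
    simp only [hx, hy]
    by_cases hxs : x.1 h.castSucc = s
    · by_cases hys : y.1 h.castSucc = s
      · rw [if_pos hxs, if_pos hys, if_pos hxs, if_pos hys]
        have hGxy : G (splice (h : ℕ) x y) = G y := by
          refine hG _ _ fun k hk => ?_
          exact ⟨splice_obs' (h : ℕ) x y k (by omega),
            splice_act' (h : ℕ) x y k (by omega)⟩
        rw [hGxy]
        have hsp := splice_chainP Em T h d sched1 sched2 hag x y (hxs.trans hys.symm)
        calc chainP Em T n d sched1 (splice (↑h) x y) * G y *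
              chainP Em T n d sched2 (splice (↑h) y x)
            = (chainP Em T n d sched1 (splice (↑h) x y) *
                chainP Em T n d sched2 (splice (↑h) y x)) * G y := by ring
          _ = (chainP Em T n d sched1 x * chainP Em T n d sched2 y) * G y := by rw [hsp]
          _ = chainP Em T n d sched1 x * (chainP Em T n d sched2 y * G y) := by ring
      · rw [if_neg hys, if_neg hys, mul_zero, mul_zero]
    · rw [if_neg hxs, if_neg hxs, zero_mul, zero_mul]
  have hmain : (∑ z : CT S O A n × CT S O A n,
      (if z.1.1 h.castSucc = s then chainP Em T n d sched1 z.1 * G z.1 else 0) *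
        (if z.2.1 h.castSucc = s then chainP Em T n d sched2 z.2 else 0)) =
      ∑ z : CT S O A n × CT S O A n,
      (if z.1.1 h.castSucc = s then chainP Em T n d sched1 z.1 else 0) *
        (if z.2.1 h.castSucc = s then chainP Em T n d sched2 z.2 * G z.2 else 0) := by
    rw [← Equiv.sum_comp (spliceEquiv (S := S) (O := O) (A := A) n (h : ℕ))]
    exact Finset.sum_congr rfl fun z _ => hpt z
  have l1 : (∑ tr : CT S O A n,
        if tr.1 h.castSucc = s then chainP Em T n d sched1 tr * G tr else 0) *
      (∑ tr : CT S O A n, if tr.1 h.castSucc = s then chainP Em T n d sched2 tr else 0) =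
      ∑ z : CT S O A n × CT S O A n,
      (if z.1.1 h.castSucc = s then chainP Em T n d sched1 z.1 * G z.1 else 0) *
        (if z.2.1 h.castSucc = s then chainP Em T n d sched2 z.2 else 0) := by
    rw [Finset.sum_mul_sum]
    conv_rhs => rw [Fintype.sum_prod_type]
  have l2 : (∑ tr : CT S O A n,
        if tr.1 h.castSucc = s then chainP Em T n d sched1 tr else 0) *
      (∑ tr : CT S O A n,
        if tr.1 h.castSucc = s then chainP Em T n d sched2 tr * G tr else 0) =
      ∑ z : CT S O A n × CT S O A n,
      (if z.1.1 h.castSucc = s then chainP Em T n d sched1 z.1 else 0) *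
        (if z.2.1 h.castSucc = s then chainP Em T n d sched2 z.2 * G z.2 else 0) := by
    rw [Finset.sum_mul_sum]
    conv_rhs => rw [Fintype.sum_prod_type]
  rw [l1, l2, hmain]


lemma chainP_nonneg (Em : S → O → ℝ) (T : S → A → S → ℝ) {n : ℕ} (d : S → ℝ)
    (sched : ℕ → O → A → ℝ) (hd : ∀ s, 0 ≤ d s) (hEm : ∀ s o, 0 ≤ Em s o)
    (hT : ∀ s a s', 0 ≤ T s a s') (hs : ∀ k o a, 0 ≤ sched k o a)
    (tr : CT S O A n) : 0 ≤ chainP Em T n d sched tr := by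
  refine mul_nonneg (hd _) (Finset.prod_nonneg fun k _ => ?_)
  exact mul_nonneg (mul_nonneg (hEm _ _) (hs _ _ _)) (hT _ _ _)

lemma chainP_dom (Em : S → O → ℝ) (T : S → A → S → ℝ) {n : ℕ} (d : S → ℝ)
    (sched1 sched2 : ℕ → O → A → ℝ)
    (hdom : ∀ (k : ℕ) (o : O) (a : A), sched2 k o a = 0 → sched1 k o a = 0)
    (tr : CT S O A n) (h0 : chainP Em T n d sched2 tr = 0) :
    chainP Em T n d sched1 tr = 0 := by
  unfold chainP at h0 ⊢
  rcases mul_eq_zero.mp h0 with hd0 | hp0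
  · rw [hd0, zero_mul]
  · apply mul_eq_zero_of_right
    obtain ⟨k, _, hk⟩ := Finset.prod_eq_zero_iff.mp hp0
    refine Finset.prod_eq_zero (Finset.mem_univ k) ?_
    rcases mul_eq_zero.mp hk with hk2 | hT0
    · rcases mul_eq_zero.mp hk2 with hEm0 | hs0
      · rw [hEm0, zero_mul, zero_mul]
      · rw [hdom _ _ _ hs0, mul_zero, zero_mul]
    · rw [hT0, mul_zero]

/-- The schedule playing `π_e` before step `m` and `π_b` from step `m` on. -/
def cutS {O A : Type} (πe πb : O → A → ℝ) (m : ℕ) : ℕ → O → A → ℝ :=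
  fun k => if k < m then πe else πb

end Stmt0Aux

/-- in a finite-horizon POMDP with memoryless policies `π_e` and `π_b`
(`π_b(a|o) > 0`), for any future-dependent function `V` (with the convention
`V(f_{H+1}) = 0`),
`J(π_e) − E_{π_b}[V(f_1)] = Σ_{h=1}^H E_{s_h ∼ d^{π_e}_h}[(B^S V)(s_h)]`. -/
theorem stmt0
    (S O A : Type) [Fintype S] [Fintype O] [Fintype A]
    [DecidableEq S] [DecidableEq O] [DecidableEq A]
    (P : POMDP S O A)
    (hT : ∀ s a, (∀ s', 0 ≤ P.T s a s') ∧ ∑ s', P.T s a s' = 1)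
    (hEm : ∀ s, (∀ o, 0 ≤ P.Em s o) ∧ ∑ o, P.Em s o = 1)
    (hd1 : (∀ s, 0 ≤ P.d1 s) ∧ ∑ s, P.d1 s = 1)
    (hR : ∀ o a, 0 ≤ P.R o a ∧ P.R o a ≤ 1)
    (πe πb : O → A → ℝ)
    (hπe : ∀ o, (∀ a, 0 ≤ πe o a) ∧ ∑ a, πe o a = 1)
    (hπb : ∀ o, (∀ a, 0 < πb o a) ∧ ∑ a, πb o a = 1)
    (V : ℕ → (Fin P.H → O) → (Fin P.H → A) → ℝ)
    (hdep : P.FutureDep V)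
    (hconv : ∀ o a, V P.H o a = 0) :
    P.J πe - P.expec (fun _ => πb) (fun tr => V 0 tr.2.1 tr.2.2) =
      ∑ h : Fin P.H, ∑ s : S, P.stateDist (fun _ => πe) h s * P.BS πe πb V h s := by
  classical
  open Stmt0Aux in
  have hEm1 : ∀ s, ∑ o, P.Em s o = 1 := fun s => (hEm s).2
  have hT1 : ∀ s a, ∑ s', P.T s a s' = 1 := fun s a => (hT s a).2
  have hπe1 : ∀ o : O, ∑ a, πe o a = 1 := fun o => (hπe o).2
  have hπb1 : ∀ o : O, ∑ a, πb o a = 1 := fun o => (hπb o).2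
  have hcut1 : ∀ m k (o : O), ∑ a, Stmt0Aux.cutS πe πb m k o a = 1 := by
    intro m k o; unfold Stmt0Aux.cutS; by_cases hk : k < m <;> simp [hk, hπe1 o, hπb1 o]
  have hmix1 : ∀ (m k : ℕ) (o : O), ∑ a, mix πe πb m k o a = 1 := by
    intro m k o; unfold mix; by_cases hk : k = m <;> simp [hk, hπe1 o, hπb1 o]
  have tpe : ∀ sched : ℕ → O → A → ℝ,
      P.trajProb sched = Stmt0Aux.chainP P.Em P.T P.H P.d1 sched := fun _ => rfl
  -- the marginal state distribution only depends on the schedule before step h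
  have hsd : ∀ (h : Fin P.H) (m : ℕ), (h : ℕ) ≤ m → ∀ s : S,
      P.stateDist (fun _ => πe) h s =
        ∑ tr : P.Traj, if tr.1 h.castSucc = s
          then Stmt0Aux.chainP P.Em P.T P.H P.d1 (Stmt0Aux.cutS πe πb m) tr else 0 := by
    intro h m hm s
    unfold POMDP.stateDist POMDP.expec
    simp only [tpe]
    rw [Stmt0Aux.chain_sched_irrel P.Em P.T hEm1 hT1 m P.H P.d1 (fun _ => πe)
      (Stmt0Aux.cutS πe πb m) (fun _ o => hπe1 o) (fun k o => hcut1 m k o)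
      (fun k hk => by simp [Stmt0Aux.cutS, hk])
      _ ?_]
    · simp only [mul_ite, mul_one, mul_zero]
    · intro tr tr' hst hoa
      have := hst h.castSucc (by simpa using hm)
      rw [this]
  -- nonnegativity facts
  have hmix_nn : ∀ (m k : ℕ) (o : O) (a : A), 0 ≤ mix πe πb m k o a := by
    intro m k o a; unfold mix; by_cases hk : k = m <;>
      simp [hk, (hπe o).1 a, le_of_lt ((hπb o).1 a)]
  have hpb_nn : ∀ (k : ℕ) (o : O) (a : A), 0 ≤ (fun _ : ℕ => πb) k o a :=
    fun _ o a => le_of_lt ((hπb o).1 a)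
  have key : ∀ h : Fin P.H,
      (∑ s : S, P.stateDist (fun _ => πe) h s * P.BS πe πb V h s)
        = P.expec (Stmt0Aux.cutS πe πb ((h : ℕ) + 1))
            (fun tr => P.R (tr.2.1 h) (tr.2.2 h) + V ((h : ℕ) + 1) tr.2.1 tr.2.2)
          - P.expec (Stmt0Aux.cutS πe πb (h : ℕ))
              (fun tr => V (h : ℕ) tr.2.1 tr.2.2) := by
    intro h
    have claim1 : ∀ s : S,
        P.stateDist (fun _ => πe) h s *
          P.condExp (mix πe πb h) (fun tr => tr.1 h.castSucc = s)
            (fun tr => P.R (tr.2.1 h) (tr.2.2 h) + V ((h : ℕ) + 1) tr.2.1 tr.2.2)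
        = ∑ tr : P.Traj, if tr.1 h.castSucc = s
            then Stmt0Aux.chainP P.Em P.T P.H P.d1 (Stmt0Aux.cutS πe πb ((h : ℕ) + 1)) tr *
              (P.R (tr.2.1 h) (tr.2.2 h) + V ((h : ℕ) + 1) tr.2.1 tr.2.2) else 0 := by
      intro s
      rw [hsd h ((h : ℕ) + 1) (by omega) s]
      unfold POMDP.condExp
      simp only [tpe]
      have hag1 : ∀ k, (h : ℕ) ≤ k →
          Stmt0Aux.cutS πe πb ((h : ℕ) + 1) k = mix πe πb (h : ℕ) k := by
        intro k hk
        by_cases hk2 : k = (h : ℕ)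
        · subst hk2; simp [Stmt0Aux.cutS, mix]
        · have hlt : ¬ k < (h : ℕ) + 1 := by omega
          simp [Stmt0Aux.cutS, mix, hlt, hk2]
      have hGdep : ∀ x y : P.Traj,
          (∀ k : Fin P.H, (h : ℕ) ≤ (k : ℕ) → x.2.1 k = y.2.1 k ∧ x.2.2 k = y.2.2 k) →
          (P.R (x.2.1 h) (x.2.2 h) + V ((h : ℕ) + 1) x.2.1 x.2.2)
            = P.R (y.2.1 h) (y.2.2 h) + V ((h : ℕ) + 1) y.2.1 y.2.2 := by
        intro x y hxy
        have h1 := hxy h (le_refl _)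
        have h2 : V ((h : ℕ) + 1) x.2.1 x.2.2 = V ((h : ℕ) + 1) y.2.1 y.2.2 :=
          hdep ((h : ℕ) + 1) _ _ _ _ (fun k hk => hxy k (by omega))
        rw [h1.1, h1.2, h2]
      have hex := Stmt0Aux.exchange P.Em P.T h s P.d1
        (Stmt0Aux.cutS πe πb ((h : ℕ) + 1)) (mix πe πb (h : ℕ)) hag1
        (fun tr => P.R (tr.2.1 h) (tr.2.2 h) + V ((h : ℕ) + 1) tr.2.1 tr.2.2) hGdep
      by_cases hB : (∑ tr : P.Traj, if tr.1 h.castSucc = s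
          then Stmt0Aux.chainP P.Em P.T P.H P.d1 (mix πe πb (h : ℕ)) tr else 0) = 0
      · rw [hB, div_zero, mul_zero]
        symm; refine Finset.sum_eq_zero fun tr _ => ?_
        by_cases hE : tr.1 h.castSucc = s
        · have hnn : ∀ tr' ∈ (Finset.univ : Finset P.Traj),
              0 ≤ (if tr'.1 h.castSucc = s
                then Stmt0Aux.chainP P.Em P.T P.H P.d1 (mix πe πb (h : ℕ)) tr' else 0) := by
            intro tr' _
            by_cases hE' : tr'.1 h.castSucc = s
            · rw [if_pos hE']
              exact Stmt0Aux.chainP_nonneg _ _ _ _ hd1.1 (fun s o => (hEm s).1 o)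
                (fun s a s' => (hT s a).1 s') (hmix_nn (h : ℕ)) tr'
            · rw [if_neg hE']
          have h0 := (Finset.sum_eq_zero_iff_of_nonneg hnn).mp hB tr (Finset.mem_univ tr)
          rw [if_pos hE] at h0
          have hdom : ∀ (k : ℕ) (o : O) (a : A),
              mix πe πb (h : ℕ) k o a = 0 → Stmt0Aux.cutS πe πb ((h : ℕ) + 1) k o a = 0 := by
            intro k o a hz
            by_cases hk2 : k = (h : ℕ)
            · subst hk2
              simp [mix] at hz
              simp [Stmt0Aux.cutS, Nat.lt_succ_self, hz]
            · exfalso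
              simp only [mix, if_neg hk2] at hz
              exact absurd hz (ne_of_gt ((hπb o).1 a))
          rw [if_pos hE, Stmt0Aux.chainP_dom P.Em P.T P.d1 _ _ hdom tr h0, zero_mul]
        · rw [if_neg hE]
      · rw [mul_div_assoc', ← hex, mul_div_assoc, div_self hB, mul_one]
    have claim2 : ∀ s : S,
        P.stateDist (fun _ => πe) h s *
          P.condExp (fun _ => πb) (fun tr => tr.1 h.castSucc = s)
            (fun tr => V (h : ℕ) tr.2.1 tr.2.2)
        = ∑ tr : P.Traj, if tr.1 h.castSucc = s
            then Stmt0Aux.chainP P.Em P.T P.H P.d1 (Stmt0Aux.cutS πe πb (h : ℕ)) tr *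
              (V (h : ℕ) tr.2.1 tr.2.2) else 0 := by
      intro s
      rw [hsd h (h : ℕ) (le_refl _) s]
      unfold POMDP.condExp
      simp only [tpe]
      have hag1 : ∀ k, (h : ℕ) ≤ k →
          Stmt0Aux.cutS πe πb (h : ℕ) k = (fun _ : ℕ => πb) k := by
        intro k hk
        have hlt : ¬ k < (h : ℕ) := by omega
        simp [Stmt0Aux.cutS, hlt]
      have hGdep : ∀ x y : P.Traj,
          (∀ k : Fin P.H, (h : ℕ) ≤ (k : ℕ) → x.2.1 k = y.2.1 k ∧ x.2.2 k = y.2.2 k) →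
          V (h : ℕ) x.2.1 x.2.2 = V (h : ℕ) y.2.1 y.2.2 := by
        intro x y hxy
        exact hdep (h : ℕ) _ _ _ _ (fun k hk => hxy k hk)
      have hex := Stmt0Aux.exchange P.Em P.T h s P.d1
        (Stmt0Aux.cutS πe πb (h : ℕ)) (fun _ => πb) hag1
        (fun tr => V (h : ℕ) tr.2.1 tr.2.2) hGdep
      by_cases hB : (∑ tr : P.Traj, if tr.1 h.castSucc = s
          then Stmt0Aux.chainP P.Em P.T P.H P.d1 (fun _ => πb) tr else 0) = 0
      · rw [hB, div_zero, mul_zero]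
        symm; refine Finset.sum_eq_zero fun tr _ => ?_
        by_cases hE : tr.1 h.castSucc = s
        · have hnn : ∀ tr' ∈ (Finset.univ : Finset P.Traj),
              0 ≤ (if tr'.1 h.castSucc = s
                then Stmt0Aux.chainP P.Em P.T P.H P.d1 (fun _ => πb) tr' else 0) := by
            intro tr' _
            by_cases hE' : tr'.1 h.castSucc = s
            · rw [if_pos hE']
              exact Stmt0Aux.chainP_nonneg _ _ _ _ hd1.1 (fun s o => (hEm s).1 o)
                (fun s a s' => (hT s a).1 s') hpb_nn tr'
            · rw [if_neg hE']
          have h0 := (Finset.sum_eq_zero_iff_of_nonneg hnn).mp hB tr (Finset.mem_univ tr)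
          rw [if_pos hE] at h0
          have hdom : ∀ (k : ℕ) (o : O) (a : A),
              (fun _ : ℕ => πb) k o a = 0 → Stmt0Aux.cutS πe πb (h : ℕ) k o a = 0 := by
            intro k o a hz
            exact absurd hz (ne_of_gt ((hπb o).1 a))
          rw [if_pos hE, Stmt0Aux.chainP_dom P.Em P.T P.d1 _ _ hdom tr h0, zero_mul]
        · rw [if_neg hE]
      · rw [mul_div_assoc', ← hex, mul_div_assoc, div_self hB, mul_one]
    -- assemble the per-step identity
    have hsplit : ∀ s : S, P.stateDist (fun _ => πe) h s * P.BS πe πb V h s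
        = (∑ tr : P.Traj, if tr.1 h.castSucc = s
            then Stmt0Aux.chainP P.Em P.T P.H P.d1 (Stmt0Aux.cutS πe πb ((h : ℕ) + 1)) tr *
              (P.R (tr.2.1 h) (tr.2.2 h) + V ((h : ℕ) + 1) tr.2.1 tr.2.2) else 0)
          - (∑ tr : P.Traj, if tr.1 h.castSucc = s
            then Stmt0Aux.chainP P.Em P.T P.H P.d1 (Stmt0Aux.cutS πe πb (h : ℕ)) tr *
              (V (h : ℕ) tr.2.1 tr.2.2) else 0) := by
      intro s
      unfold POMDP.BS
      rw [mul_sub, claim1 s, claim2 s]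
    rw [Finset.sum_congr rfl fun s _ => hsplit s, Finset.sum_sub_distrib]
    congr 1
    · rw [Finset.sum_comm]
      unfold POMDP.expec
      simp only [tpe]
      refine Finset.sum_congr rfl fun tr _ => ?_
      rw [Finset.sum_ite_eq (Finset.univ : Finset S) (tr.1 h.castSucc), if_pos (Finset.mem_univ _)]
    · rw [Finset.sum_comm]
      unfold POMDP.expec
      simp only [tpe]
      refine Finset.sum_congr rfl fun tr _ => ?_
      rw [Finset.sum_ite_eq (Finset.univ : Finset S) (tr.1 h.castSucc), if_pos (Finset.mem_univ _)]
  -- final assembly: telescoping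
  have lin : ∀ h : Fin P.H,
      P.expec (Stmt0Aux.cutS πe πb ((h : ℕ) + 1))
          (fun tr => P.R (tr.2.1 h) (tr.2.2 h) + V ((h : ℕ) + 1) tr.2.1 tr.2.2)
        = P.expec (Stmt0Aux.cutS πe πb ((h : ℕ) + 1)) (fun tr => P.R (tr.2.1 h) (tr.2.2 h))
          + P.expec (Stmt0Aux.cutS πe πb ((h : ℕ) + 1))
              (fun tr => V ((h : ℕ) + 1) tr.2.1 tr.2.2) := by
    intro h
    unfold POMDP.expec
    rw [← Finset.sum_add_distrib]
    exact Finset.sum_congr rfl fun tr _ => by ring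
  have hRirrel : ∀ h : Fin P.H,
      P.expec (Stmt0Aux.cutS πe πb ((h : ℕ) + 1)) (fun tr => P.R (tr.2.1 h) (tr.2.2 h))
        = P.expec (fun _ => πe) (fun tr => P.R (tr.2.1 h) (tr.2.2 h)) := by
    intro h
    unfold POMDP.expec
    simp only [tpe]
    refine Stmt0Aux.chain_sched_irrel P.Em P.T hEm1 hT1 ((h : ℕ) + 1) P.H P.d1
      (Stmt0Aux.cutS πe πb ((h : ℕ) + 1)) (fun _ => πe)
      (fun k o => hcut1 _ k o) (fun _ o => hπe1 o)
      (fun k hk => by simp [Stmt0Aux.cutS, hk]) _ ?_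
    intro tr tr' hst hoa
    have := hoa h (by omega)
    rw [this.1, this.2]
  have hJsplit : P.J πe
      = ∑ h : Fin P.H, P.expec (fun _ => πe) (fun tr => P.R (tr.2.1 h) (tr.2.2 h)) := by
    unfold POMDP.J POMDP.expec
    simp only [Finset.mul_sum]
    exact Finset.sum_comm
  have hcut0 : Stmt0Aux.cutS πe πb 0 = (fun _ => πb) := by
    funext k; simp [Stmt0Aux.cutS]
  have hWH : P.expec (Stmt0Aux.cutS πe πb P.H) (fun tr => V P.H tr.2.1 tr.2.2) = 0 := by
    unfold POMDP.expec; simp [hconv]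
  have htel : ∑ h : Fin P.H,
      (P.expec (Stmt0Aux.cutS πe πb ((h : ℕ) + 1)) (fun tr => V ((h : ℕ) + 1) tr.2.1 tr.2.2)
        - P.expec (Stmt0Aux.cutS πe πb (h : ℕ)) (fun tr => V (h : ℕ) tr.2.1 tr.2.2))
      = P.expec (Stmt0Aux.cutS πe πb P.H) (fun tr => V P.H tr.2.1 tr.2.2)
        - P.expec (Stmt0Aux.cutS πe πb 0) (fun tr => V 0 tr.2.1 tr.2.2) := by
    have h1 := Finset.sum_range_sub
      (fun m => P.expec (Stmt0Aux.cutS πe πb m) (fun tr => V m tr.2.1 tr.2.2)) P.H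
    rw [← Fin.sum_univ_eq_sum_range] at h1
    exact h1
  have step2 : ∀ h : Fin P.H,
      P.expec (Stmt0Aux.cutS πe πb ((h : ℕ) + 1))
          (fun tr => P.R (tr.2.1 h) (tr.2.2 h) + V ((h : ℕ) + 1) tr.2.1 tr.2.2)
        - P.expec (Stmt0Aux.cutS πe πb (h : ℕ)) (fun tr => V (h : ℕ) tr.2.1 tr.2.2)
      = P.expec (fun _ => πe) (fun tr => P.R (tr.2.1 h) (tr.2.2 h))
        + (P.expec (Stmt0Aux.cutS πe πb ((h : ℕ) + 1))
              (fun tr => V ((h : ℕ) + 1) tr.2.1 tr.2.2)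
          - P.expec (Stmt0Aux.cutS πe πb (h : ℕ)) (fun tr => V (h : ℕ) tr.2.1 tr.2.2)) := by
    intro h
    rw [lin h, hRirrel h]
    ring
  rw [Finset.sum_congr rfl fun h _ => key h,
    Finset.sum_congr rfl fun h _ => step2 h,
    Finset.sum_add_distrib, ← hJsplit, htel, hWH, hcut0]
  ring
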